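/- Let A_μ ∈ (−1,1), A_e > 0, and let X: ℝ → ℝ² be twice continuously differentiable and 2π-periodic. Define F_L(θ) = 2A_e X''(θ) − (2A_e A_μ/(1−A_μ)) R⁻¹ X'(θ). Then for every θ ∈ ℝ, F_L(θ) + (A_μ/π) ∫_{−π}^{π} M(θ,η) F_L(η) dη = 2A_e X''(θ) − (2A_e A_μ/(1−A_μ)) [ R⁻¹X'(θ) + (1/(2π)) ( −⟨e_r, X⟩ e_r(θ) + ⟨e_t, X⟩ e_t(θ) ) ]. -/

import Mathlib

open Real intervalIntegral Matrix

/-- The radial unit vector `e_r(θ) = (cos θ, sin θ)`. -/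
noncomputable def er (θ : ℝ) : Fin 2 → ℝ := ![Real.cos θ, Real.sin θ]

/-- The tangential unit vector `e_t(θ) = (−sin θ, cos θ)`. -/
noncomputable def et (θ : ℝ) : Fin 2 → ℝ := ![-Real.sin θ, Real.cos θ]

/-- The matrix kernel
`M(θ,η) = (1/2)·[[1−cos(θ+η), −sin(θ+η)], [−sin(θ+η), 1+cos(θ+η)]]`. -/
noncomputable def Mmat (θ η : ℝ) : Matrix (Fin 2) (Fin 2) ℝ :=
  (1 / 2 : ℝ) •
    !![1 - Real.cos (θ + η), -Real.sin (θ + η);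
       -Real.sin (θ + η), 1 + Real.cos (θ + η)]

/-- The matrix `R⁻¹ = [[0,1],[−1,0]]`, inverse of the rotation by `π/2`. -/
noncomputable def Rinv : Matrix (Fin 2) (Fin 2) ℝ := !![0, 1; -1, 0]

section Aux
open MeasureTheory


lemma perval {g : ℝ → ℝ} (hper : ∀ x, g (x + 2*π) = g x) : g π = g (-π) := by
  have h := hper (-π)
  rw [show -π + 2*π = π by ring] at h
  exact h

lemma deriv_per {F : Type*} [NormedAddCommGroup F] [NormedSpace ℝ F]
    {g : ℝ → F} (hper : ∀ x, g (x + 2*π) = g x) (x : ℝ) :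
    deriv g (x + 2*π) = deriv g x := by
  rw [← deriv_comp_add_const (f := g) (a := 2*π) (x := x)]
  congr 1
  funext y
  exact hper y

lemma cd_deriv {F : Type*} [NormedAddCommGroup F] [NormedSpace ℝ F]
    {g : ℝ → F} (hg : ContDiff ℝ 2 g) : ContDiff ℝ 1 (deriv g) := by
  have h2 : ContDiff ℝ ((1 : ℕ) + 1) g := by norm_num; exact hg
  exact (contDiff_succ_iff_deriv.mp h2).2.2

lemma int_deriv_zero {g : ℝ → ℝ} (hg : ContDiff ℝ 1 g) (hper : ∀ x, g (x + 2*π) = g x) :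
    ∫ η in (-π)..π, deriv g η = 0 := by
  rw [intervalIntegral.integral_deriv_eq_sub (fun x _ => (hg.differentiable one_ne_zero) x)
    ((hg.continuous_deriv le_rfl).intervalIntegrable _ _), perval hper, sub_self]

lemma int_cos_deriv {g : ℝ → ℝ} (hg : ContDiff ℝ 1 g) (hper : ∀ x, g (x + 2*π) = g x) :
    ∫ η in (-π)..π, Real.cos η * deriv g η = ∫ η in (-π)..π, Real.sin η * g η := by
  have h := intervalIntegral.integral_mul_deriv_eq_deriv_mul
    (u := Real.cos) (u' := fun x => -Real.sin x) (v := g) (v' := deriv g)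
    (a := -π) (b := π)
    (fun x _ => Real.hasDerivAt_cos x)
    (fun x _ => ((hg.differentiable one_ne_zero) x).hasDerivAt)
    ((Real.continuous_sin.neg).intervalIntegrable _ _)
    ((hg.continuous_deriv le_rfl).intervalIntegrable _ _)
  rw [h, perval hper, Real.cos_neg]
  have e : ∀ x, -Real.sin x * g x = -(Real.sin x * g x) := fun x => by ring
  simp only [e, intervalIntegral.integral_neg]
  ring

lemma int_sin_deriv {g : ℝ → ℝ} (hg : ContDiff ℝ 1 g) (hper : ∀ x, g (x + 2*π) = g x) :
    ∫ η in (-π)..π, Real.sin η * deriv g η = -∫ η in (-π)..π, Real.cos η * g η := by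
  have h := intervalIntegral.integral_mul_deriv_eq_deriv_mul
    (u := Real.sin) (u' := Real.cos) (v := g) (v' := deriv g)
    (a := -π) (b := π)
    (fun x _ => Real.hasDerivAt_sin x)
    (fun x _ => ((hg.differentiable one_ne_zero) x).hasDerivAt)
    (Real.continuous_cos.intervalIntegrable _ _)
    ((hg.continuous_deriv le_rfl).intervalIntegrable _ _)
  rw [h]
  simp [Real.sin_pi]

lemma int_cos_dderiv {g : ℝ → ℝ} (hg : ContDiff ℝ 2 g) (hper : ∀ x, g (x + 2*π) = g x) :
    ∫ η in (-π)..π, Real.cos η * deriv (deriv g) η = -∫ η in (-π)..π, Real.cos η * g η := by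
  rw [int_cos_deriv (cd_deriv hg) (deriv_per hper), int_sin_deriv (hg.of_le (by norm_num)) hper]

lemma int_sin_dderiv {g : ℝ → ℝ} (hg : ContDiff ℝ 2 g) (hper : ∀ x, g (x + 2*π) = g x) :
    ∫ η in (-π)..π, Real.sin η * deriv (deriv g) η = -∫ η in (-π)..π, Real.sin η * g η := by
  rw [int_sin_deriv (cd_deriv hg) (deriv_per hper), int_cos_deriv (hg.of_le (by norm_num)) hper]

lemma int_dderiv_zero {g : ℝ → ℝ} (hg : ContDiff ℝ 2 g) (hper : ∀ x, g (x + 2*π) = g x) :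
    ∫ η in (-π)..π, deriv (deriv g) η = 0 :=
  int_deriv_zero (cd_deriv hg) (deriv_per hper)

lemma deriv_comp_apply {X : ℝ → Fin 2 → ℝ} (hX : Differentiable ℝ X) (θ : ℝ) (i : Fin 2) :
    deriv X θ i = deriv (fun t => X t i) θ := by
  have h : HasDerivAt (fun t => X t i) (deriv X θ i) θ := by
    exact (hasDerivAt_pi.mp (hX θ).hasDerivAt) i
  exact h.deriv.symm

lemma ii_apply {f : ℝ → Fin 2 → ℝ} {a b : ℝ} (hf : IntervalIntegrable f volume a b)
    (i : Fin 2) : (∫ x in a..b, f x) i = ∫ x in a..b, f x i := by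
  have := (ContinuousLinearMap.proj (R := ℝ) (φ := fun _ : Fin 2 => ℝ) i).intervalIntegral_comp_comm hf
  simpa using this.symm

lemma lincomb {u v : ℝ → ℝ} (hu : Continuous u) (hv : Continuous v)
    (k0 k1 k2 l0 l1 l2 : ℝ) :
    ∫ η in (-π)..π, ((k0 + k1 * Real.cos η + k2 * Real.sin η) * u η
        + (l0 + l1 * Real.cos η + l2 * Real.sin η) * v η)
      = k0 * (∫ η in (-π)..π, u η) + k1 * (∫ η in (-π)..π, Real.cos η * u η)
        + k2 * (∫ η in (-π)..π, Real.sin η * u η)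
        + l0 * (∫ η in (-π)..π, v η) + l1 * (∫ η in (-π)..π, Real.cos η * v η)
        + l2 * (∫ η in (-π)..π, Real.sin η * v η) := by
  have h1 : Continuous (fun η => Real.cos η * u η) := Real.continuous_cos.mul hu
  have h2 : Continuous (fun η => Real.sin η * u η) := Real.continuous_sin.mul hu
  have h3 : Continuous (fun η => Real.cos η * v η) := Real.continuous_cos.mul hv
  have h4 : Continuous (fun η => Real.sin η * v η) := Real.continuous_sin.mul hv
  rw [show (k0 * (∫ η in (-π)..π, u η) + k1 * (∫ η in (-π)..π, Real.cos η * u η)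
        + k2 * (∫ η in (-π)..π, Real.sin η * u η)
        + l0 * (∫ η in (-π)..π, v η) + l1 * (∫ η in (-π)..π, Real.cos η * v η)
        + l2 * (∫ η in (-π)..π, Real.sin η * v η)) =
      ((((((∫ η in (-π)..π, k0 * u η) + ∫ η in (-π)..π, k1 * (Real.cos η * u η))
        + ∫ η in (-π)..π, k2 * (Real.sin η * u η))
        + ∫ η in (-π)..π, l0 * v η) + ∫ η in (-π)..π, l1 * (Real.cos η * v η))
        + ∫ η in (-π)..π, l2 * (Real.sin η * v η)) by
    simp [intervalIntegral.integral_const_mul]]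
  rw [← intervalIntegral.integral_add, ← intervalIntegral.integral_add,
    ← intervalIntegral.integral_add, ← intervalIntegral.integral_add,
    ← intervalIntegral.integral_add]
  · congr 1; funext η; ring
  all_goals
    apply Continuous.intervalIntegrable
    fun_prop

lemma int_weight {w p q : ℝ → ℝ} (hw : Continuous w) (hp : Continuous p)
    (hq : Continuous q) (α β : ℝ) :
    ∫ η in (-π)..π, w η * (α * p η + β * q η)
      = α * (∫ η in (-π)..π, w η * p η) + β * (∫ η in (-π)..π, w η * q η) := by
  rw [show (α * (∫ η in (-π)..π, w η * p η) + β * (∫ η in (-π)..π, w η * q η)) =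
      ((∫ η in (-π)..π, α * (w η * p η)) + ∫ η in (-π)..π, β * (w η * q η)) by
    simp [intervalIntegral.integral_const_mul]]
  rw [← intervalIntegral.integral_add]
  · congr 1; funext η; ring
  · exact (Continuous.intervalIntegrable (by fun_prop) _ _)
  · exact (Continuous.intervalIntegrable (by fun_prop) _ _)

end Aux

set_option maxHeartbeats 1000000 in
/-- The linear force `F_L(θ) = 2A_e X''(θ) − (2A_e A_μ/(1−A_μ))R⁻¹X'(θ)` solves
the linearized boundary integral equation: for every `θ`,
`F_L(θ) + (A_μ/π)∫_{−π}^{π} M(θ,η)F_L(η)dη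
 = 2A_e X''(θ) − (2A_e A_μ/(1−A_μ))[R⁻¹X'(θ) + (1/(2π))(−⟨e_r,X⟩e_r(θ) + ⟨e_t,X⟩e_t(θ))]`. -/
theorem linear_force_solves (Aμ Ae : ℝ) (hμ : Aμ ∈ Set.Ioo (-1 : ℝ) 1) (hAe : 0 < Ae)
    (X : ℝ → Fin 2 → ℝ) (hX : ContDiff ℝ 2 X) (hper : ∀ θ : ℝ, X (θ + 2 * π) = X θ)
    (FL : ℝ → Fin 2 → ℝ)
    (hFL : ∀ θ, FL θ =
      (2 * Ae) • deriv (deriv X) θ - (2 * Ae * Aμ / (1 - Aμ)) • Rinv.mulVec (deriv X θ)) :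
    ∀ θ : ℝ,
      FL θ + (Aμ / π) • (∫ η in (-π)..π, (Mmat θ η).mulVec (FL η)) =
        (2 * Ae) • deriv (deriv X) θ -
          (2 * Ae * Aμ / (1 - Aμ)) •
            (Rinv.mulVec (deriv X θ) +
              (1 / (2 * π)) •
                (-(∫ η in (-π)..π, er η ⬝ᵥ X η) • er θ +
                  (∫ η in (-π)..π, et η ⬝ᵥ X η) • et θ)) := by
  intro θ
  obtain ⟨hμl, hμr⟩ := hμ
  have h1μ : (1 : ℝ) - Aμ ≠ 0 := by intro h; nlinarith
  have hπ : (π : ℝ) ≠ 0 := Real.pi_ne_zero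
  set c : ℝ := 2 * Ae * Aμ / (1 - Aμ) with hc
  set f0 : ℝ → ℝ := fun t => X t 0 with hf0
  set f1 : ℝ → ℝ := fun t => X t 1 with hf1
  have hXd : Differentiable ℝ X := hX.differentiable (by norm_num)
  have hXd' : Differentiable ℝ (deriv X) := (cd_deriv hX).differentiable one_ne_zero
  have hcf0 : ContDiff ℝ 2 f0 :=
    (ContinuousLinearMap.proj (R := ℝ) (φ := fun _ : Fin 2 => ℝ) 0).contDiff.comp hX
  have hcf1 : ContDiff ℝ 2 f1 :=
    (ContinuousLinearMap.proj (R := ℝ) (φ := fun _ : Fin 2 => ℝ) 1).contDiff.comp hX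
  have hp0 : ∀ x, f0 (x + 2*π) = f0 x := fun x => by simp only [hf0, hper x]
  have hp1 : ∀ x, f1 (x + 2*π) = f1 x := fun x => by simp only [hf1, hper x]
  have hd0 : ∀ t, deriv X t 0 = deriv f0 t := fun t => deriv_comp_apply hXd t 0
  have hd1 : ∀ t, deriv X t 1 = deriv f1 t := fun t => deriv_comp_apply hXd t 1
  have hdd0 : ∀ t, deriv (deriv X) t 0 = deriv (deriv f0) t := by
    intro t
    rw [deriv_comp_apply hXd' t 0]
    exact Filter.EventuallyEq.deriv_eq (Filter.Eventually.of_forall hd0)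
  have hdd1 : ∀ t, deriv (deriv X) t 1 = deriv (deriv f1) t := by
    intro t
    rw [deriv_comp_apply hXd' t 1]
    exact Filter.EventuallyEq.deriv_eq (Filter.Eventually.of_forall hd1)
  -- FL components
  have hFL0 : ∀ η, FL η 0 = 2 * Ae * deriv (deriv f0) η + (-c) * deriv f1 η := by
    intro η
    have h := congrFun (hFL η) 0
    simp only [Pi.sub_apply, Pi.smul_apply, smul_eq_mul] at h
    rw [h, hdd0 η, show Rinv.mulVec (deriv X η) 0 = deriv X η 1 by
      simp [Rinv, Matrix.mulVec, dotProduct, Fin.sum_univ_two], hd1 η]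
    ring
  have hFL1 : ∀ η, FL η 1 = 2 * Ae * deriv (deriv f1) η + c * deriv f0 η := by
    intro η
    have h := congrFun (hFL η) 1
    simp only [Pi.sub_apply, Pi.smul_apply, smul_eq_mul] at h
    rw [h, hdd1 η, show Rinv.mulVec (deriv X η) 1 = -deriv X η 0 by
      simp [Rinv, Matrix.mulVec, dotProduct, Fin.sum_univ_two], hd0 η]
    ring
  -- continuity
  have hcdf0 : Continuous (deriv f0) := hcf0.continuous_deriv (by norm_num)
  have hcdf1 : Continuous (deriv f1) := hcf1.continuous_deriv (by norm_num)
  have hcddf0 : Continuous (deriv (deriv f0)) := (cd_deriv hcf0).continuous_deriv le_rfl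
  have hcddf1 : Continuous (deriv (deriv f1)) := (cd_deriv hcf1).continuous_deriv le_rfl
  have hcF0 : Continuous (fun η => FL η 0) := by
    rw [show (fun η => FL η 0) = fun η => 2 * Ae * deriv (deriv f0) η + (-c) * deriv f1 η
      from funext hFL0]
    fun_prop
  have hcF1 : Continuous (fun η => FL η 1) := by
    rw [show (fun η => FL η 1) = fun η => 2 * Ae * deriv (deriv f1) η + c * deriv f0 η
      from funext hFL1]
    fun_prop
  -- fundamental integrals
  set C0 : ℝ := ∫ η in (-π)..π, Real.cos η * f0 η with hC0
  set S0 : ℝ := ∫ η in (-π)..π, Real.sin η * f0 η with hS0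
  set C1 : ℝ := ∫ η in (-π)..π, Real.cos η * f1 η with hC1
  set S1 : ℝ := ∫ η in (-π)..π, Real.sin η * f1 η with hS1
  -- weighted integrals of FL components
  have hIF0 : (∫ η in (-π)..π, FL η 0) = 0 := by
    rw [intervalIntegral.integral_congr (g := fun η =>
        (1:ℝ) * (2 * Ae * deriv (deriv f0) η + (-c) * deriv f1 η))
        (fun η _ => by rw [hFL0 η]; ring),
      int_weight continuous_const hcddf0 hcdf1]
    simp only [one_mul]
    rw [int_dderiv_zero hcf0 hp0, int_deriv_zero (hcf1.of_le (by norm_num)) hp1]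
    ring
  have hIF1 : (∫ η in (-π)..π, FL η 1) = 0 := by
    rw [intervalIntegral.integral_congr (g := fun η =>
        (1:ℝ) * (2 * Ae * deriv (deriv f1) η + c * deriv f0 η))
        (fun η _ => by rw [hFL1 η]; ring),
      int_weight continuous_const hcddf1 hcdf0]
    simp only [one_mul]
    rw [int_dderiv_zero hcf1 hp1, int_deriv_zero (hcf0.of_le (by norm_num)) hp0]
    ring
  have hICF0 : (∫ η in (-π)..π, Real.cos η * FL η 0) = 2 * Ae * (-C0) + (-c) * S1 := by
    rw [intervalIntegral.integral_congr (g := fun η =>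
        Real.cos η * (2 * Ae * deriv (deriv f0) η + (-c) * deriv f1 η))
        (fun η _ => by rw [hFL0 η]),
      int_weight Real.continuous_cos hcddf0 hcdf1,
      int_cos_dderiv hcf0 hp0, int_cos_deriv (hcf1.of_le (by norm_num)) hp1]
  have hISF0 : (∫ η in (-π)..π, Real.sin η * FL η 0) = 2 * Ae * (-S0) + c * C1 := by
    rw [intervalIntegral.integral_congr (g := fun η =>
        Real.sin η * (2 * Ae * deriv (deriv f0) η + (-c) * deriv f1 η))
        (fun η _ => by rw [hFL0 η]),
      int_weight Real.continuous_sin hcddf0 hcdf1,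
      int_sin_dderiv hcf0 hp0, int_sin_deriv (hcf1.of_le (by norm_num)) hp1]
    ring
  have hICF1 : (∫ η in (-π)..π, Real.cos η * FL η 1) = 2 * Ae * (-C1) + c * S0 := by
    rw [intervalIntegral.integral_congr (g := fun η =>
        Real.cos η * (2 * Ae * deriv (deriv f1) η + c * deriv f0 η))
        (fun η _ => by rw [hFL1 η]),
      int_weight Real.continuous_cos hcddf1 hcdf0,
      int_cos_dderiv hcf1 hp1, int_cos_deriv (hcf0.of_le (by norm_num)) hp0]
  have hISF1 : (∫ η in (-π)..π, Real.sin η * FL η 1) = 2 * Ae * (-S1) + (-c) * C0 := by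
    rw [intervalIntegral.integral_congr (g := fun η =>
        Real.sin η * (2 * Ae * deriv (deriv f1) η + c * deriv f0 η))
        (fun η _ => by rw [hFL1 η]),
      int_weight Real.continuous_sin hcddf1 hcdf0,
      int_sin_dderiv hcf1 hp1, int_sin_deriv (hcf0.of_le (by norm_num)) hp0]
    ring
  -- the matrix integrand componentwise
  have hM0 : ∀ η, (Mmat θ η).mulVec (FL η) 0 =
      (1/2 + (-(Real.cos θ)/2) * Real.cos η + (Real.sin θ/2) * Real.sin η) * FL η 0
      + (0 + (-(Real.sin θ)/2) * Real.cos η + (-(Real.cos θ)/2) * Real.sin η) * FL η 1 := by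
    intro η
    simp [Mmat, Matrix.mulVec, dotProduct, Fin.sum_univ_two, Real.cos_add, Real.sin_add]
    ring
  have hM1 : ∀ η, (Mmat θ η).mulVec (FL η) 1 =
      (0 + (-(Real.sin θ)/2) * Real.cos η + (-(Real.cos θ)/2) * Real.sin η) * FL η 0
      + (1/2 + (Real.cos θ/2) * Real.cos η + (-(Real.sin θ)/2) * Real.sin η) * FL η 1 := by
    intro η
    simp [Mmat, Matrix.mulVec, dotProduct, Fin.sum_univ_two, Real.cos_add, Real.sin_add]
    ring
  have hMc : Continuous (fun η => (Mmat θ η).mulVec (FL η)) := by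
    apply continuous_pi
    intro i
    fin_cases i
    · have h : Continuous fun η => (Mmat θ η).mulVec (FL η) (0 : Fin 2) := by
        rw [show (fun η => (Mmat θ η).mulVec (FL η) 0) = fun η =>
          (1/2 + (-(Real.cos θ)/2) * Real.cos η + (Real.sin θ/2) * Real.sin η) * FL η 0
          + (0 + (-(Real.sin θ)/2) * Real.cos η + (-(Real.cos θ)/2) * Real.sin η) * FL η 1
          from funext hM0]
        fun_prop
      exact h
    · have h : Continuous fun η => (Mmat θ η).mulVec (FL η) (1 : Fin 2) := by
        rw [show (fun η => (Mmat θ η).mulVec (FL η) 1) = fun η =>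
          (0 + (-(Real.sin θ)/2) * Real.cos η + (-(Real.cos θ)/2) * Real.sin η) * FL η 0
          + (1/2 + (Real.cos θ/2) * Real.cos η + (-(Real.sin θ)/2) * Real.sin η) * FL η 1
          from funext hM1]
        fun_prop
      exact h
  -- components of the vector integral
  have key0 : (∫ η in (-π)..π, (Mmat θ η).mulVec (FL η)) 0
      = (Ae / (1 - Aμ)) * ((C0 + S1) * Real.cos θ + (C1 - S0) * Real.sin θ) := by
    rw [ii_apply (hMc.intervalIntegrable _ _) 0,
      intervalIntegral.integral_congr (fun η _ => hM0 η),
      lincomb hcF0 hcF1, hIF0, hIF1, hICF0, hISF0, hICF1, hISF1, hc]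
    field_simp
    ring
  have key1 : (∫ η in (-π)..π, (Mmat θ η).mulVec (FL η)) 1
      = (Ae / (1 - Aμ)) * ((C0 + S1) * Real.sin θ - (C1 - S0) * Real.cos θ) := by
    rw [ii_apply (hMc.intervalIntegrable _ _) 1,
      intervalIntegral.integral_congr (fun η _ => hM1 η),
      lincomb hcF0 hcF1, hIF0, hIF1, hICF0, hISF0, hICF1, hISF1, hc]
    field_simp
    ring
  -- the a and b integrals
  have ha : (∫ η in (-π)..π, er η ⬝ᵥ X η) = C0 + S1 := by
    rw [intervalIntegral.integral_congr (g := fun η =>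
        Real.cos η * f0 η + Real.sin η * f1 η)
        (fun η _ => by simp [er, dotProduct, Fin.sum_univ_two, hf0, hf1]),
      intervalIntegral.integral_add (f := fun η => Real.cos η * f0 η) (g := fun η => Real.sin η * f1 η)
        ((Real.continuous_cos.mul hcf0.continuous).intervalIntegrable _ _)
        ((Real.continuous_sin.mul hcf1.continuous).intervalIntegrable _ _)]
  have hb : (∫ η in (-π)..π, et η ⬝ᵥ X η) = C1 - S0 := by
    rw [intervalIntegral.integral_congr (g := fun η =>
        Real.cos η * f1 η - Real.sin η * f0 η)
        (fun η _ => by simp [et, dotProduct, Fin.sum_univ_two, hf0, hf1]; ring),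
      intervalIntegral.integral_sub (f := fun η => Real.cos η * f1 η) (g := fun η => Real.sin η * f0 η)
        ((Real.continuous_cos.mul hcf1.continuous).intervalIntegrable _ _)
        ((Real.continuous_sin.mul hcf0.continuous).intervalIntegrable _ _)]
  -- finish componentwise
  rw [ha, hb]
  funext i
  fin_cases i
  · simp only [Fin.mk_zero, Fin.mk_one, Pi.add_apply, Pi.sub_apply, Pi.smul_apply,
      Pi.neg_apply, smul_eq_mul, key0, er, et, Matrix.cons_val_zero]
    rw [hFL0 θ, hdd0 θ, show Rinv.mulVec (deriv X θ) 0 = deriv X θ 1 by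
      simp [Rinv, Matrix.mulVec, dotProduct, Fin.sum_univ_two], hd1 θ, hc]
    field_simp
    ring
  · simp only [Fin.mk_zero, Fin.mk_one, Pi.add_apply, Pi.sub_apply, Pi.smul_apply,
      Pi.neg_apply, smul_eq_mul, key1, er, et, Matrix.cons_val_one, Matrix.head_cons, Matrix.cons_val_zero]
    rw [hFL1 θ, hdd1 θ, show Rinv.mulVec (deriv X θ) 1 = -deriv X θ 0 by
      simp [Rinv, Matrix.mulVec, dotProduct, Fin.sum_univ_two], hd0 θ, hc]
    field_simp
    ring
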